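/- If R is a commutative K-Hermite ring and 1 ≤ i ≤ n, then the quotient module S/S_i is isomorphic as an R-module to (R/Ra_i)^{n−2}. -/

import Mathlib

open Matrix

/-- Theorem `S/S_1`: if `R` is a commutative K-Hermite ring then
`S/Sᵢ ≅ (R/Raᵢ)^{n−2}` for every `1 ≤ i ≤ n`. -/
theorem stmt_5 {R : Type*} [CommRing R] [Nontrivial R]
    (hKH : ∀ (m : ℕ), 1 ≤ m → ∀ b : Fin m → R,
      ∃ (Q : Matrix (Fin m) (Fin m) R) (d : R), IsUnit Q.det ∧
        ∀ j, ∑ k, b k * Q k j = if (j : ℕ) = 0 then d else 0)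
    {n : ℕ} (hn : 2 ≤ n) (a : Fin n → R)
    (huni : Ideal.span (Set.range a) = ⊤)
    (S : Submodule R (Fin n → R))
    (hS : ∀ x, x ∈ S ↔ ∑ i, a i * x i = 0)
    (v : Fin n → Fin n → Fin n → R)
    (hv : ∀ i j k, v i j k = if k = i then -a j else if k = j then a i else 0)
    (Si : Fin n → Submodule R (Fin n → R))
    (hSi : ∀ i, Si i = Submodule.span R {x | ∃ j, j ≠ i ∧ x = v i j})
    (i : Fin n) :
    Nonempty ((S ⧸ Submodule.comap S.subtype (Si i)) ≃ₗ[R]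
      (Fin (n - 2) → R ⧸ Ideal.span {a i})) := by
  obtain ⟨m, rfl⟩ : ∃ m, n = m + 2 := ⟨n - 2, by omega⟩
  clear hn
  set e : Fin (m + 1) → Fin (m + 2) := i.succAbove with he
  have he_inj : Function.Injective e := Fin.succAbove_right_injective
  have he_ne : ∀ t, e t ≠ i := fun t => Fin.succAbove_ne i t
  set I : Ideal R := Ideal.span {a i} with hI
  have hai : a i ∈ I := Ideal.subset_span rfl
  -- the reduction map on coordinates ≠ i
  set Ψ : (Fin (m + 2) → R) →ₗ[R] (Fin (m + 1) → R ⧸ I) :=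
    LinearMap.pi (fun j => I.mkQ ∘ₗ LinearMap.proj (e j)) with hΨ
  have hΨapp : ∀ x j, Ψ x j = I.mkQ (x (e j)) := fun x j => rfl
  set Φ : S →ₗ[R] (Fin (m + 1) → R ⧸ I) := Ψ ∘ₗ S.subtype with hΦ
  set b : Fin (m + 1) → R ⧸ I := fun j => I.mkQ (a (e j)) with hb
  set L : (Fin (m + 1) → R ⧸ I) →ₗ[R] (R ⧸ I) :=
    { toFun := fun y => dotProduct b y
      map_add' := by
        intro y z
        simp [dotProduct, mul_add, Finset.sum_add_distrib]
      map_smul' := by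
        intro r y
        simp [dotProduct, Finset.smul_sum, mul_smul_comm] } with hL
  have hLapp : ∀ y, L y = ∑ t, b t * y t := fun y => rfl
  set f : R →+* R ⧸ I := Ideal.Quotient.mk I with hf
  have hfmk : ∀ x : R, f x = I.mkQ x := fun _ => rfl
  -- generators are in S
  have hvS : ∀ j, j ≠ i → v i j ∈ S := by
    intro j hj
    obtain ⟨t, rfl⟩ := Fin.exists_succAbove_eq hj
    rw [hS, Fin.sum_univ_succAbove _ i]
    have h1 : ∀ t' : Fin (m + 1), a (e t') * v i (e t) (e t')
        = if t' = t then a (e t') * a i else 0 := by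
      intro t'
      rw [hv, if_neg (he_ne t')]
      by_cases h : t' = t
      · subst h; rw [if_pos rfl, if_pos rfl]
      · rw [if_neg (fun hh => h (he_inj hh)), if_neg h, mul_zero]
    rw [Finset.sum_congr rfl (fun t' _ => h1 t'), Finset.sum_ite_eq' Finset.univ t,
      if_pos (Finset.mem_univ t), hv, if_pos rfl]
    ring
  -- Si i is contained in the kernel of Ψ
  have hSiker : Si i ≤ LinearMap.ker Ψ := by
    rw [hSi]
    refine Submodule.span_le.2 ?_
    rintro x ⟨j, hj, rfl⟩
    obtain ⟨t, rfl⟩ := Fin.exists_succAbove_eq hj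
    rw [SetLike.mem_coe, LinearMap.mem_ker]
    funext t'
    rw [hΨapp, hv, if_neg (he_ne t')]
    by_cases h : e t' = e t
    · rw [if_pos h]
      exact (Submodule.Quotient.mk_eq_zero I).2 hai
    · rw [if_neg h]
      simp
  -- kernel of Φ
  have h_ker : LinearMap.ker Φ = Submodule.comap S.subtype (Si i) := by
    apply le_antisymm
    · intro x hx
      rw [LinearMap.mem_ker] at hx
      rw [Submodule.mem_comap]
      have hx' : ∀ t, x.1 (e t) ∈ I := by
        intro t
        refine (Submodule.Quotient.mk_eq_zero I).1 ?_
        have := congrFun hx t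
        rw [show Φ x t = I.mkQ (x.1 (e t)) from rfl] at this
        exact this
      choose c hc using fun t => Ideal.mem_span_singleton'.1 (hx' t)
      set y : Fin (m + 2) → R := x.1 - ∑ t, c t • v i (e t) with hy
      have hyS : y ∈ S := S.sub_mem x.2
        (Submodule.sum_mem S fun t _ => S.smul_mem _ (hvS _ (he_ne t)))
      have hy_e : ∀ t, y (e t) = 0 := by
        intro t
        have h2 : (∑ t', c t' • v i (e t')) (e t) = c t * a i := by
          rw [Finset.sum_apply]
          have h3 : ∀ t' : Fin (m + 1), (c t' • v i (e t')) (e t)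
              = if t' = t then c t' * a i else 0 := by
            intro t'
            rw [Pi.smul_apply, smul_eq_mul, hv, if_neg (he_ne t)]
            by_cases h : t' = t
            · subst h; rw [if_pos rfl, if_pos rfl]
            · rw [if_neg (fun hh => h (he_inj hh).symm), if_neg h, mul_zero]
          rw [Finset.sum_congr rfl (fun t' _ => h3 t'), Finset.sum_ite_eq' Finset.univ t,
            if_pos (Finset.mem_univ t)]
        rw [hy, Pi.sub_apply, h2, hc t, sub_self]
      have hay : a i * y i = 0 := by
        have h4 := (hS y).1 hyS
        rw [Fin.sum_univ_succAbove _ i] at h4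
        simpa only [← he, hy_e, mul_zero, Finset.sum_const_zero, add_zero] using h4
      have h1mem : (1 : R) ∈ Ideal.span (Set.range a) := by rw [huni]; trivial
      obtain ⟨r, hr⟩ := Ideal.mem_span_range_iff_exists_fun.1 h1mem
      have hyi : y i = ∑ t, a (e t) * (r (e t) * y i) := by
        calc y i = (∑ k, r k * a k) * y i := by rw [hr, one_mul]
          _ = ∑ k, r k * a k * y i := by rw [Finset.sum_mul]
          _ = r i * a i * y i + ∑ t, r (e t) * a (e t) * y i :=
              Fin.sum_univ_succAbove _ i
          _ = ∑ t, a (e t) * (r (e t) * y i) := by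
              rw [show r i * a i * y i = r i * (a i * y i) by ring, hay, mul_zero, zero_add]
              exact Finset.sum_congr rfl fun t _ => by ring
      have hy_rep : y = ∑ t, (-(r (e t) * y i)) • v i (e t) := by
        funext k
        rw [Finset.sum_apply]
        by_cases hk : k = i
        · subst hk
          have h5 : ∀ t : Fin (m + 1), (-(r (e t) * y k) • v k (e t)) k
              = a (e t) * (r (e t) * y k) := by
            intro t
            rw [Pi.smul_apply, smul_eq_mul, hv, if_pos rfl]
            ring
          rw [Finset.sum_congr rfl (fun t _ => h5 t)]
          exact hyi
        · obtain ⟨t, rfl⟩ := Fin.exists_succAbove_eq hk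
          rw [hy_e t]
          have h6 : ∀ t' : Fin (m + 1), (-(r (e t') * y i) • v i (e t')) (e t) = 0 := by
            intro t'
            rw [Pi.smul_apply, smul_eq_mul, hv, if_neg (he_ne t)]
            by_cases h : e t = e t'
            · rw [if_pos h]
              have : r (e t') * y i * a i = r (e t') * (a i * y i) := by ring
              rw [neg_mul, this, hay, mul_zero, neg_zero]
            · rw [if_neg h, mul_zero]
          rw [Finset.sum_congr rfl (fun t' _ => h6 t'), Finset.sum_const_zero]
      have hxeq : x.1 = (∑ t, c t • v i (e t)) + ∑ t, (-(r (e t) * y i)) • v i (e t) := by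
        rw [← hy_rep, hy]; ring
      show (x : Fin (m + 2) → R) ∈ Si i
      rw [hSi, hxeq]
      refine Submodule.add_mem _ ?_ ?_ <;>
        exact Submodule.sum_mem _ fun t _ => Submodule.smul_mem _ _
          (Submodule.subset_span ⟨e t, he_ne t, rfl⟩)
    · intro x hx
      rw [Submodule.mem_comap] at hx
      exact LinearMap.mem_ker.2 (LinearMap.mem_ker.1 (hSiker hx))
  -- range of Φ
  have h_range : LinearMap.range Φ = LinearMap.ker L := by
    apply le_antisymm
    · rintro y ⟨x, rfl⟩
      rw [LinearMap.mem_ker, hLapp]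
      have hx := (hS x.1).1 x.2
      rw [Fin.sum_univ_succAbove _ i] at hx
      have h7 : ∀ t, b t * Φ x t = f (a (e t) * x.1 (e t)) := by
        intro t
        rw [_root_.map_mul]; rfl
      rw [Finset.sum_congr rfl (fun t _ => h7 t), ← _root_.map_sum]
      rw [show (∑ t, a (e t) * x.1 (e t)) = -(a i * x.1 i) by linear_combination hx]
      exact Ideal.Quotient.eq_zero_iff_mem.2 (I.neg_mem (Ideal.mul_mem_right _ I hai))
    · rintro y hy
      rw [LinearMap.mem_ker, hLapp] at hy
      choose z hz using fun t => Ideal.Quotient.mk_surjective (y t)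
      have h5 : f (∑ t, a (e t) * z t) = 0 := by
        rw [_root_.map_sum]
        rw [show (0 : R ⧸ I) = ∑ t, b t * y t from hy.symm]
        refine Finset.sum_congr rfl fun t _ => ?_
        rw [_root_.map_mul, hz t]; rfl
      obtain ⟨c, hc⟩ := Ideal.mem_span_singleton'.1 (Ideal.Quotient.eq_zero_iff_mem.1 h5)
      have h8 : (i.insertNth (-c) z : Fin (m + 2) → R) i = -c := by simp
      have h9 : ∀ t, (i.insertNth (-c) z : Fin (m + 2) → R) (e t) = z t := fun t => by
        rw [he]; simp
      have hxS : (i.insertNth (-c) z : Fin (m + 2) → R) ∈ S := by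
        rw [hS, Fin.sum_univ_succAbove _ i, h8]
        rw [Finset.sum_congr rfl (fun t _ => by rw [h9 t]), ← hc]
        ring
      refine ⟨⟨(i.insertNth (-c) z : Fin (m + 2) → R), hxS⟩, ?_⟩
      funext t
      show I.mkQ ((i.insertNth (-c) z : Fin (m + 2) → R) (e t)) = y t
      rw [h9 t, ← hz t]
      rfl
  -- K-Hermite data for the reduced row
  obtain ⟨Q₀, d₀, hdet₀, heq₀⟩ := hKH (m + 1) (by omega) (fun t => a (e t))
  set Q : Matrix (Fin (m + 1)) (Fin (m + 1)) (R ⧸ I) := Q₀.map f with hQdef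
  set d : R ⧸ I := f d₀ with hd
  have hdet : IsUnit Q.det := by
    show IsUnit (f.mapMatrix Q₀).det
    rw [← RingHom.map_det]; exact hdet₀.map f
  have hQ : ∀ jj, (∑ k, b k * Q k jj) = if (jj : ℕ) = 0 then d else 0 := by
    intro jj
    have h1 : (∑ k, b k * Q k jj) = f (∑ k, a (e k) * Q₀ k jj) := by
      rw [_root_.map_sum]
      exact Finset.sum_congr rfl fun k _ => (_root_.map_mul f _ _).symm
    rw [h1, heq₀ jj, apply_ite f, _root_.map_zero]
  have hbd : ∀ k, b k = d * Q⁻¹ 0 k := by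
    intro k
    have h0 : b ᵥ* Q = fun jj : Fin (m + 1) => if (jj : ℕ) = 0 then d else 0 := by
      funext jj
      rw [← hQ jj]
      rfl
    have h1 : (fun jj : Fin (m + 1) => if (jj : ℕ) = 0 then d else 0) ᵥ* Q⁻¹ = b := by
      rw [← h0, Matrix.vecMul_vecMul, Matrix.mul_nonsing_inv _ hdet, Matrix.vecMul_one]
    rw [← congrFun h1 k]
    show (∑ jj : Fin (m + 1), (if (jj : ℕ) = 0 then d else 0) * Q⁻¹ jj k) = d * Q⁻¹ 0 k
    rw [Fin.sum_univ_succ]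
    simp [Fin.val_succ]
  have hd_unit : IsUnit d := by
    have h1mem : (1 : R) ∈ Ideal.span (Set.range a) := by rw [huni]; trivial
    obtain ⟨r, hr⟩ := Ideal.mem_span_range_iff_exists_fun.1 h1mem
    have h3 : (1 : R ⧸ I) = ∑ t, f (r (e t)) * b t := by
      calc (1 : R ⧸ I) = f (∑ k, r k * a k) := by rw [hr, _root_.map_one]
        _ = ∑ k, f (r k) * f (a k) := by
            rw [_root_.map_sum]; exact Finset.sum_congr rfl fun k _ => _root_.map_mul f _ _
        _ = f (r i) * f (a i) + ∑ t, f (r (e t)) * f (a (e t)) :=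
            Fin.sum_univ_succAbove _ i
        _ = ∑ t, f (r (e t)) * b t := by
            rw [Ideal.Quotient.eq_zero_iff_mem.2 hai, mul_zero, zero_add]
            rfl
    have h4 : (1 : R ⧸ I) = d * ∑ t, f (r (e t)) * Q⁻¹ 0 t := by
      rw [h3, Finset.mul_sum]
      exact Finset.sum_congr rfl fun t _ => by rw [hbd t]; ring
    exact IsUnit.of_mul_eq_one _ h4.symm
  -- the explicit equivalence on the kernel of L
  have hmemT : ∀ z : Fin m → R ⧸ I, Q *ᵥ (Fin.cons 0 z) ∈ LinearMap.ker L := by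
    intro z
    rw [LinearMap.mem_ker]
    show dotProduct b (Q *ᵥ Fin.cons 0 z) = 0
    rw [Matrix.dotProduct_mulVec]
    have hw : b ᵥ* Q = fun jj : Fin (m + 1) => if (jj : ℕ) = 0 then d else 0 := by
      funext jj
      rw [← hQ jj]
      rfl
    rw [hw]
    show (∑ jj : Fin (m + 1), (if (jj : ℕ) = 0 then d else 0) * (Fin.cons 0 z : Fin (m + 1) → R ⧸ I) jj) = 0
    rw [Fin.sum_univ_succ]
    simp
  have E3 : (LinearMap.ker L) ≃ₗ[R] (Fin m → R ⧸ I) := by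
    refine
      { toFun := fun x => Fin.tail (Q⁻¹ *ᵥ x.1)
        invFun := fun z => ⟨Q *ᵥ Fin.cons 0 z, hmemT z⟩
        map_add' := ?_
        map_smul' := ?_
        left_inv := ?_
        right_inv := ?_ }
    · intro x y
      funext j
      simp [Fin.tail, Matrix.mulVec_add]
    · intro r x
      funext j
      simp [Fin.tail, Matrix.mulVec_smul]
    · intro x
      apply Subtype.ext
      have hx0 : (Q⁻¹ *ᵥ x.1) 0 = 0 := by
        have h7 : d * (Q⁻¹ *ᵥ x.1) 0 = ∑ k, b k * x.1 k := by
          show d * (∑ k, Q⁻¹ 0 k * x.1 k) = _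
          rw [Finset.mul_sum]
          exact Finset.sum_congr rfl fun k _ => by rw [hbd k]; ring
        rw [← hLapp x.1, LinearMap.mem_ker.1 x.2] at h7
        exact (hd_unit.mul_right_eq_zero).1 h7
      show Q *ᵥ Fin.cons 0 (Fin.tail (Q⁻¹ *ᵥ x.1)) = x.1
      rw [← hx0, Fin.cons_self_tail, Matrix.mulVec_mulVec,
        Matrix.mul_nonsing_inv _ hdet, Matrix.one_mulVec]
    · intro z
      show Fin.tail (Q⁻¹ *ᵥ (Q *ᵥ Fin.cons 0 z)) = z
      rw [Matrix.mulVec_mulVec, Matrix.nonsing_inv_mul _ hdet,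
        Matrix.one_mulVec, Fin.tail_cons]
  exact ⟨(Submodule.quotEquivOfEq _ _ h_ker.symm).trans
    ((Φ.quotKerEquivRange).trans ((LinearEquiv.ofEq _ _ h_range).trans E3))⟩
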